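/- Let A be a finite rank torsion-free module over a Dedekind domain R. If A is a self-pure-generator (every pure submodule of A is A-generated), then every pure rank-1 submodule of A is A-generated. Conversely, if A has a direct summand B of rank 1 such that type(B) = IT(A), then A is a self-pure-generator. -/

import Mathlib

open TensorProduct

/-- The pure submodule of `A` generated by `a`:
`⟨a⟩_* = {x ∈ A : r • x ∈ R a for some nonzero r ∈ R}`. -/
def pureGen (R : Type*) {A : Type*} [CommRing R] [IsDomain R] [AddCommGroup A]
    [Module R A] (a : A) : Submodule R A where
  carrier := {x | ∃ r : R, r ≠ 0 ∧ ∃ s : R, r • x = s • a}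
  zero_mem' := ⟨1, one_ne_zero, 0, by simp⟩
  add_mem' := by
    rintro x y ⟨r, hr, s, hx⟩ ⟨r', hr', s', hy⟩
    refine ⟨r * r', mul_ne_zero hr hr', r' * s + r * s', ?_⟩
    rw [smul_add, add_smul, mul_smul, mul_smul, mul_smul, smul_comm r r' x, hx, hy,
      smul_comm r' s a, smul_comm r s' a, smul_smul, smul_smul, mul_comm s' r]
  smul_mem' := by
    rintro c x ⟨r, hr, s, hx⟩
    exact ⟨r, hr, c * s, by rw [smul_comm, hx, mul_smul]⟩
universe u

/-- A submodule `K ≤ A` is pure iff `A ⧸ K` is torsion-free, i.e.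
`r • x ∈ K` with `r ≠ 0` implies `x ∈ K`. -/
def IsPureSubmodule (R : Type*) {A : Type*} [CommRing R] [AddCommGroup A]
    [Module R A] (K : Submodule R A) : Prop :=
  ∀ (r : R) (x : A), r ≠ 0 → r • x ∈ K → x ∈ K

/-- `K` is `A`-generated: some direct sum of copies of `A` surjects onto `K`. -/
def ModGenerated (R : Type*) {A : Type u} [CommRing R] [AddCommGroup A]
    [Module R A] (K : Submodule R A) : Prop :=
  ∃ (ι : Type u) (f : (ι →₀ A) →ₗ[R] K), Function.Surjective f

/-- `A` is a self-pure-generator: every pure submodule of `A` is `A`-generated. -/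
def SelfPureGenerator (R : Type*) (A : Type u) [CommRing R] [AddCommGroup A]
    [Module R A] : Prop :=
  ∀ K : Submodule R A, IsPureSubmodule R K → ModGenerated R K

set_option linter.unusedSectionVars false
set_option linter.unusedVariables false
set_option maxHeartbeats 1000000

section Cnt
open IsDedekindDomain IsDedekindDomain.HeightOneSpectrum
variable {R : Type*} [CommRing R] [IsDomain R] [IsDedekindDomain R]

noncomputable def cnt (v : HeightOneSpectrum R) (J : Ideal R) : ℕ∞ := emultiplicity v.asIdeal J

lemma pow_dvd_iff_cnt {v : HeightOneSpectrum R} {J : Ideal R} {n : ℕ} :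
    v.asIdeal ^ n ∣ J ↔ (n : ℕ∞) ≤ cnt v J := pow_dvd_iff_le_emultiplicity

lemma dvd_iff_cnt {v : HeightOneSpectrum R} {J : Ideal R} :
    v.asIdeal ∣ J ↔ 1 ≤ cnt v J := by
  simpa using (pow_dvd_iff_cnt (v := v) (J := J) (n := 1))

lemma cnt_eq_zero {v : HeightOneSpectrum R} {J : Ideal R} :
    cnt v J = 0 ↔ ¬ v.asIdeal ∣ J := emultiplicity_eq_zero

lemma cnt_ne_top {v : HeightOneSpectrum R} {J : Ideal R} (hJ : J ≠ 0) : cnt v J ≠ ⊤ :=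
  finiteMultiplicity_iff_emultiplicity_ne_top.mp (FiniteMultiplicity.of_not_isUnit (by simpa [Ideal.isUnit_iff] using v.isPrime.ne_top) hJ)

lemma cnt_mul {v : HeightOneSpectrum R} (I J : Ideal R) :
    cnt v (I * J) = cnt v I + cnt v J := emultiplicity_mul v.prime

lemma cnt_mono {v : HeightOneSpectrum R} {I J : Ideal R} (h : I ∣ J) :
    cnt v I ≤ cnt v J := emultiplicity_le_emultiplicity_of_dvd_right h

/-- If `t ∈ J` but `t ∉ J*v` then the multiplicity of `v` in `span{t}` equals that in `J`. -/
lemma cnt_span_eq_of_mem_not_mem {v : HeightOneSpectrum R} {J : Ideal R} (hJ : J ≠ 0)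
    {t : R} (ht : t ∈ J) (ht' : t ∉ J * v.asIdeal) :
    cnt v (Ideal.span {t}) = cnt v J := by
  obtain ⟨Y, hY⟩ : J ∣ Ideal.span {t} := (Ideal.dvd_span_singleton).mpr ht
  have hvY : ¬ v.asIdeal ∣ Y := by
    intro hv
    exact ht' ((Ideal.span_singleton_le_iff_mem _).mp (hY ▸ Ideal.mul_mono_right (Ideal.le_of_dvd hv)))
  rw [hY, cnt_mul, cnt_eq_zero.mpr hvY, add_zero]

lemma cnt_inf_le_max {v : HeightOneSpectrum R} {I J : Ideal R} (hI : I ≠ 0) (hJ : J ≠ 0) :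
    cnt v (I ⊓ J) ≤ max (cnt v I) (cnt v J) := by
  have hkey : cnt v (I ⊔ J) + cnt v (I ⊓ J) = cnt v I + cnt v J := by
    rw [← cnt_mul, Ideal.sup_mul_inf, cnt_mul]
  rcases le_total (cnt v I) (cnt v J) with h | h
  · -- max = cnt J ; cnt sup ≥ cnt I
    have hsup : (cnt v I : ℕ∞) ≤ cnt v (I ⊔ J) := by
      -- v^(cnt I) divides both I and J hence I ⊔ J
      rcases eq_or_ne (cnt v I) ⊤ with htop | hne
      · exact absurd htop (cnt_ne_top hI)
      · obtain ⟨n, hn⟩ := WithTop.ne_top_iff_exists.mp hne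
        rw [← hn]
        refine pow_dvd_iff_cnt.mp (Ideal.dvd_iff_le.mpr (sup_le ?_ ?_))
        · exact Ideal.le_of_dvd (pow_dvd_iff_cnt.mpr hn.le)
        · exact Ideal.le_of_dvd (pow_dvd_iff_cnt.mpr (hn.le.trans h))
    have h2 := add_le_add hsup (le_refl (cnt v (I ⊓ J)))
    rw [hkey] at h2
    rw [max_eq_right h]
    exact (WithTop.add_le_add_iff_left (cnt_ne_top hI)).mp h2
  · have hsup : (cnt v J : ℕ∞) ≤ cnt v (I ⊔ J) := by
      rcases eq_or_ne (cnt v J) ⊤ with htop | hne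
      · exact absurd htop (cnt_ne_top hJ)
      · obtain ⟨n, hn⟩ := WithTop.ne_top_iff_exists.mp hne
        rw [← hn]
        refine pow_dvd_iff_cnt.mp (Ideal.dvd_iff_le.mpr (sup_le ?_ ?_))
        · exact Ideal.le_of_dvd (pow_dvd_iff_cnt.mpr (hn.le.trans h))
        · exact Ideal.le_of_dvd (pow_dvd_iff_cnt.mpr hn.le)
    have h2 := add_le_add hsup (le_refl (cnt v (I ⊓ J)))
    rw [add_comm (cnt v I) (cnt v J)] at hkey
    rw [hkey] at h2
    rw [max_eq_left h]
    exact (WithTop.add_le_add_iff_left (cnt_ne_top hJ)).mp h2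

/-- local divisibility: if the multiplicity of `v` in `y` is at most that in `x`, then
`y` divides `s*x` for some `s` outside `v`. -/
lemma loc_div (v : HeightOneSpectrum R) {x y : R} (hx : x ≠ 0) (hy : y ≠ 0)
    (h : cnt v (Ideal.span {y}) ≤ cnt v (Ideal.span {x})) :
    ∃ s w : R, s ∉ v.asIdeal ∧ s * x = w * y := by
  set D : Ideal R := Ideal.span {x} ⊔ Ideal.span {y} with hD
  have hD0 : D ≠ 0 := by
    intro h0
    apply hx
    have : x ∈ D := le_sup_left (α := Ideal R) (Ideal.mem_span_singleton_self x)
    simpa [h0] using this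
  obtain ⟨X₁, hX₁⟩ : D ∣ Ideal.span {x} := Ideal.dvd_iff_le.mpr le_sup_left
  obtain ⟨Y₁, hY₁⟩ : D ∣ Ideal.span {y} := Ideal.dvd_iff_le.mpr le_sup_right
  have hY₁0 : Y₁ ≠ 0 := by
    rintro rfl
    simp only [mul_zero] at hY₁
    exact hy (by simpa [Ideal.span_singleton_eq_bot] using hY₁)
  have hcop : X₁ ⊔ Y₁ = ⊤ := by
    have h1 : D * (X₁ ⊔ Y₁) = D * ⊤ := by
      rw [Ideal.mul_sup, ← hX₁, ← hY₁, Ideal.mul_top, hD]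
    exact mul_left_cancel₀ hD0 h1
  have hYv : ¬ Y₁ ≤ v.asIdeal := by
    intro hle
    have hvY : v.asIdeal ∣ Y₁ := Ideal.dvd_iff_le.mpr hle
    have hvX : ¬ v.asIdeal ∣ X₁ := by
      intro hvX
      have : (⊤ : Ideal R) ≤ v.asIdeal := hcop ▸ sup_le (Ideal.le_of_dvd hvX) hle
      exact v.isPrime.ne_top (top_le_iff.mp this)
    have hc1 : cnt v (Ideal.span {y}) = cnt v D + cnt v Y₁ := by rw [hY₁, cnt_mul]
    have hc2 : cnt v (Ideal.span {x}) = cnt v D := by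
      rw [hX₁, cnt_mul, cnt_eq_zero.mpr hvX, add_zero]
    rw [hc1, hc2] at h
    have h1 : (1 : ℕ∞) ≤ cnt v Y₁ := dvd_iff_cnt.mp hvY
    have h2 : cnt v D + 1 ≤ cnt v D + 0 := by
      simpa using le_trans (add_le_add le_rfl h1) h
    have hfin : cnt v D ≠ ⊤ := cnt_ne_top hD0
    have := (WithTop.add_le_add_iff_left hfin).mp h2
    exact (by norm_num : ¬ ((1:ℕ∞) ≤ 0)) this
  obtain ⟨s, hsY, hsv⟩ := SetLike.not_le_iff_exists.mp hYv
  have hdvd : s * x ∈ Ideal.span {y} := by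
    have h1 : Ideal.span {s * x} ≤ Ideal.span {y} := by
      calc Ideal.span {s * x} = Ideal.span {s} * Ideal.span {x} := by
            rw [Ideal.span_singleton_mul_span_singleton]
          _ ≤ Y₁ * (D * X₁) := Ideal.mul_mono ((Ideal.span_singleton_le_iff_mem _).mpr hsY) hX₁.le
          _ = Ideal.span {y} * X₁ := by rw [hY₁]; ring
          _ ≤ Ideal.span {y} := Ideal.mul_le_left
    exact h1 (Ideal.mem_span_singleton_self _)
  obtain ⟨w, hw⟩ := Ideal.mem_span_singleton'.mp hdvd
  exact ⟨s, w, hsv, hw.symm⟩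


/-- There is an element of a nonzero ideal `J` whose multiplicity agrees with that of `J`
at each prime in a given finite set. -/
lemma exists_exact {J : Ideal R} (hJ : J ≠ 0) (S : Finset (HeightOneSpectrum R)) :
    ∃ a : R, a ≠ 0 ∧ a ∈ J ∧ ∀ v ∈ S, cnt v (Ideal.span {a}) = cnt v J := by
  classical
  rcases S.eq_empty_or_nonempty with rfl | ⟨v₀, hv₀⟩
  · obtain ⟨a, haJ, ha0⟩ := Submodule.exists_mem_ne_zero_of_ne_bot hJ
    exact ⟨a, ha0, haJ, by simp⟩
  set X : HeightOneSpectrum R → Ideal R :=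
    fun v => J * ∏ w ∈ S.erase v, w.asIdeal with hX
  have hX0 : ∀ v, X v ≠ 0 := by
    intro v
    refine mul_ne_zero hJ ?_
    rw [Finset.prod_ne_zero_iff]
    exact fun w _ => w.ne_bot
  have hXJ : ∀ v, X v ≤ J := fun v => Ideal.mul_le_left
  have ht : ∀ v : HeightOneSpectrum R, ∃ u, u ∈ X v ∧ u ∉ X v * v.asIdeal := by
    intro v
    have hlt : X v * v.asIdeal < X v := by
      refine lt_of_le_of_ne Ideal.mul_le_left ?_
      intro heq
      have h2 : X v * v.asIdeal = X v * ⊤ := by rw [heq, Ideal.mul_top]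
      exact v.isPrime.ne_top (mul_left_cancel₀ (hX0 v) h2)
    obtain ⟨u, h1, h2⟩ := SetLike.exists_of_lt hlt
    exact ⟨u, h1, h2⟩
  choose t htmem htnot using ht
  have haJ : (∑ w ∈ S, t w) ∈ J := Ideal.sum_mem J (fun w _ => hXJ w (htmem w))
  have hcntX : ∀ v, cnt v (X v) = cnt v J := by
    intro v
    rw [hX, cnt_mul]
    have hnd : ¬ v.asIdeal ∣ ∏ w ∈ S.erase v, w.asIdeal := by
      intro hdvd
      obtain ⟨w, hw, hvw⟩ := (Prime.dvd_finset_prod_iff v.prime _).mp hdvd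
      have heq : w.asIdeal = v.asIdeal :=
        (w.isPrime.isMaximal w.ne_bot).eq_of_le v.isPrime.ne_top (Ideal.le_of_dvd hvw)
      exact (Finset.mem_erase.mp hw).1 (HeightOneSpectrum.ext heq.symm).symm
    rw [cnt_eq_zero.mpr hnd, add_zero]
  have hanot : ∀ v ∈ S, (∑ w ∈ S, t w) ∉ J * v.asIdeal := by
    intro v hv
    have hrest : ∑ w ∈ S.erase v, t w ∈ J * v.asIdeal := by
      refine Ideal.sum_mem _ (fun w hw => ?_)
      have hvw : v ∈ S.erase w := by
        rw [Finset.mem_erase] at hw ⊢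
        exact ⟨fun h => hw.1 h.symm, hv⟩
      have hle : X w ≤ J * v.asIdeal :=
        Ideal.mul_mono_right (Ideal.le_of_dvd (Finset.dvd_prod_of_mem _ hvw))
      exact hle (htmem w)
    have htv : t v ∉ J * v.asIdeal := by
      intro hmem
      have h1 : cnt v (Ideal.span {t v}) = cnt v J :=
        hcntX v ▸ cnt_span_eq_of_mem_not_mem (hX0 v) (htmem v) (htnot v)
      have h2 : cnt v (J * v.asIdeal) ≤ cnt v (Ideal.span {t v}) :=
        cnt_mono (Ideal.dvd_span_singleton.mpr hmem)
      rw [cnt_mul, h1] at h2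
      have h3 : (1:ℕ∞) ≤ cnt v v.asIdeal := dvd_iff_cnt.mp dvd_rfl
      have h4 : cnt v J + 1 ≤ cnt v J + 0 := by
        simpa using le_trans (add_le_add le_rfl h3) h2
      have h5 := (WithTop.add_le_add_iff_left (cnt_ne_top hJ)).mp h4
      exact (by norm_num : ¬ ((1:ℕ∞) ≤ 0)) h5
    rw [← Finset.add_sum_erase S t hv]
    intro hmem
    exact htv (by simpa using Submodule.sub_mem _ hmem hrest)
  refine ⟨∑ w ∈ S, t w, ?_, haJ, ?_⟩
  · intro h0
    exact hanot v₀ hv₀ (h0 ▸ Submodule.zero_mem _)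
  · intro v hv
    exact cnt_span_eq_of_mem_not_mem hJ haJ (hanot v hv)

end Cnt

section Crux
open IsDedekindDomain IsDedekindDomain.HeightOneSpectrum
variable {R : Type*} [CommRing R] [IsDomain R] [IsDedekindDomain R]
variable {K : Type*} [Field K] [Algebra R K] [IsFractionRing R K]

lemma mem_of_loc (hRF : ¬IsField R) (N : Submodule R K) (x : K)
    (h : ∀ v : HeightOneSpectrum R, ∃ s : R, s ∉ v.asIdeal ∧ s • x ∈ N) : x ∈ N := by
  by_contra hx
  set J : Ideal R := Submodule.comap (LinearMap.toSpanSingleton R K x) N with hJdef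
  have hJ : J ≠ ⊤ := by
    intro htop
    have h1 : (1:R) ∈ J := htop ▸ Submodule.mem_top
    have : (1:R) • x ∈ N := h1
    rw [one_smul] at this
    exact hx this
  obtain ⟨m, hm, hJm⟩ := Ideal.exists_le_maximal J hJ
  obtain ⟨s, hs, hsx⟩ := h ⟨m, hm.isPrime, Ring.ne_bot_of_isMaximal_of_not_isField hm hRF⟩
  exact hs (hJm hsx)

lemma main_v (B P : Submodule R K) (hBP : B ≤ P) {c : K} (hc : c ∈ P) (hc0 : c ≠ 0)
    {r : R} (hr : r ≠ 0)
    {I : Ideal R} (hI : ∀ x : R, x ∈ I ↔ ∃ b ∈ B, x • c = r • b) (hI0 : I ≠ 0)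
    {I' : Ideal R} (hI'def : I' = I ⊓ Ideal.span {r})
    {a : R} (ha : a ≠ 0) (haI : a ∈ I)
    {E : Ideal R} (hE : Ideal.span {a} = I' * E)
    (hexact : ∀ w : HeightOneSpectrum R, w.asIdeal ∣ I' → cnt w (Ideal.span {a}) = cnt w I')
    {e : R} (he : e ∈ E)
    (v : HeightOneSpectrum R) {b : K} (hb : b ∈ B) :
    ∃ s : R, s ∉ v.asIdeal ∧ ∃ p ∈ P,
      algebraMap R K s * (algebraMap R K e * algebraMap R K r * b)
        = algebraMap R K a * p := by
  have hone : (1:R) ∉ v.asIdeal := by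
    simpa using (Ideal.ne_top_iff_one v.asIdeal).mp v.isPrime.ne_top
  have hinj : Function.Injective (algebraMap R K) := IsFractionRing.injective R K
  have halg : ∀ z : R, z ≠ 0 → algebraMap R K z ≠ 0 :=
    fun z hz => (map_ne_zero_iff _ hinj).mpr hz
  have hI'0 : I' ≠ 0 := by
    rw [hI'def]
    have hle : I * Ideal.span {r} ≤ I ⊓ Ideal.span {r} :=
      le_inf Ideal.mul_le_left Ideal.mul_le_right
    intro h0
    rw [h0] at hle
    exact (mul_ne_zero hI0 (by simpa [Ideal.span_singleton_eq_bot] using hr)) (le_bot_iff.mp hle)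
  have hE0 : E ≠ 0 := by
    rintro rfl
    rw [mul_zero] at hE
    exact ha (by simpa [Ideal.span_singleton_eq_bot] using hE)
  by_cases hb0 : b = 0
  · exact ⟨1, hone, 0, Submodule.zero_mem P, by simp [hb0]⟩
  by_cases he0 : e = 0
  · exact ⟨1, hone, 0, Submodule.zero_mem P, by simp [he0]⟩
  by_cases hav : a ∈ v.asIdeal
  swap
  · -- easy case: a is a unit at v
    refine ⟨a, hav, (e * r) • b, Submodule.smul_mem P _ (hBP hb), ?_⟩
    rw [Algebra.smul_def, map_mul]
    try ring
  -- v divides span {a} = I' * E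
  have hv_dvd : v.asIdeal ∣ I' * E := hE ▸ Ideal.dvd_span_singleton.mpr hav
  rcases (v.prime.dvd_mul).mp hv_dvd with hvI' | hvE
  swap
  · -- case v ∣ E
    have hnI' : ¬ v.asIdeal ∣ I' := by
      intro hvI'
      have h1 := hexact v hvI'
      rw [hE, cnt_mul] at h1
      have h2 : cnt v I' + cnt v E ≤ cnt v I' + 0 := by simpa using h1.le
      have h3 := (WithTop.add_le_add_iff_left (cnt_ne_top hI'0)).mp h2
      have h4 : (1:ℕ∞) ≤ cnt v E := dvd_iff_cnt.mp hvE
      have h3' : cnt v E = 0 := le_antisymm h3 zero_le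
      rw [h3'] at h4
      exact (by norm_num : ¬ ((1:ℕ∞) ≤ 0)) h4
    have hcnt : cnt v (Ideal.span {a}) ≤ cnt v (Ideal.span {e}) := by
      rw [hE, cnt_mul, cnt_eq_zero.mpr hnI', zero_add]
      exact cnt_mono (Ideal.dvd_span_singleton.mpr he)
    obtain ⟨s, w, hsv, hsw⟩ := loc_div v he0 ha hcnt
    refine ⟨s, hsv, (w * r) • b, Submodule.smul_mem P _ (hBP hb), ?_⟩
    have hKw : algebraMap R K s * algebraMap R K e = algebraMap R K w * algebraMap R K a := by
      rw [← map_mul, ← map_mul, hsw]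
    rw [Algebra.smul_def, map_mul]
    calc algebraMap R K s * (algebraMap R K e * algebraMap R K r * b)
        = (algebraMap R K s * algebraMap R K e) * (algebraMap R K r * b) := by ring
      _ = (algebraMap R K w * algebraMap R K a) * (algebraMap R K r * b) := by rw [hKw]
      _ = algebraMap R K a * (algebraMap R K w * algebraMap R K r * b) := by ring
  -- case v ∣ I'
  rcases le_total (cnt v I) (cnt v (Ideal.span {r})) with hcmp | hcmp
  · -- r absorbs a at v
    have hcnt : cnt v (Ideal.span {a}) ≤ cnt v (Ideal.span {r}) := by
      rw [hexact v hvI', hI'def]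
      exact le_trans (cnt_inf_le_max hI0 (by simpa [Ideal.span_singleton_eq_bot] using hr))
        (max_le hcmp le_rfl)
    obtain ⟨s, w, hsv, hsw⟩ := loc_div v hr ha hcnt
    refine ⟨s, hsv, (e * w) • b, Submodule.smul_mem P _ (hBP hb), ?_⟩
    have hKw : algebraMap R K s * algebraMap R K r = algebraMap R K w * algebraMap R K a := by
      rw [← map_mul, ← map_mul, hsw]
    rw [Algebra.smul_def, map_mul]
    calc algebraMap R K s * (algebraMap R K e * algebraMap R K r * b)
        = algebraMap R K e * ((algebraMap R K s * algebraMap R K r) * b) := by ring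
      _ = algebraMap R K e * ((algebraMap R K w * algebraMap R K a) * b) := by rw [hKw]
      _ = algebraMap R K a * (algebraMap R K e * algebraMap R K w * b) := by ring
  · -- hard case : cnt r ≤ cnt I at v
    have hr0K : algebraMap R K r ≠ 0 := halg r hr
    have hspanr0 : Ideal.span {r} ≠ (0 : Ideal R) := by
      simpa [Ideal.span_singleton_eq_bot] using hr
    have hcI' : cnt v I' ≤ cnt v I := by
      rw [hI'def]
      exact le_trans (cnt_inf_le_max hI0 hspanr0) (max_le le_rfl hcmp)
    have hvI : (1:ℕ∞) ≤ cnt v I := le_trans (dvd_iff_cnt.mp hvI') hcI'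
    have hIv : I ≤ v.asIdeal := Ideal.le_of_dvd (dvd_iff_cnt.mpr hvI)
    -- write b and c as fractions
    obtain ⟨xb, yb, hyb, hbeq⟩ := IsFractionRing.div_surjective (A := R) b
    obtain ⟨xc, yc, hyc, hceq⟩ := IsFractionRing.div_surjective (A := R) c
    have hyb0 : yb ≠ 0 := nonZeroDivisors.ne_zero hyb
    have hyc0 : yc ≠ 0 := nonZeroDivisors.ne_zero hyc
    have hybK : algebraMap R K yb ≠ 0 := halg yb hyb0
    have hycK : algebraMap R K yc ≠ 0 := halg yc hyc0
    have hxb0 : xb ≠ 0 := by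
      rintro rfl
      rw [map_zero, zero_div] at hbeq
      exact hb0 hbeq.symm
    have hxc0 : xc ≠ 0 := by
      rintro rfl
      rw [map_zero, zero_div] at hceq
      exact hc0 hceq.symm
    have hxbK : algebraMap R K xb ≠ 0 := halg xb hxb0
    have hxcK : algebraMap R K xc ≠ 0 := halg xc hxc0
    have hNn0 : r * xb * yc ≠ 0 := mul_ne_zero (mul_ne_zero hr hxb0) hyc0
    have hDn0 : yb * xc ≠ 0 := mul_ne_zero hyb0 hxc0
    rcases le_total (cnt v (Ideal.span {yb * xc})) (cnt v (Ideal.span {r * xb * yc}))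
      with hdi | hdi
    · -- good case : r*b/c is v-integral
      obtain ⟨s1, w, hs1v, hs1⟩ := loc_div v hNn0 hDn0 hdi
      -- K-identity : s1 * (r * b) = w * c
      have hK1 : algebraMap R K s1 * (algebraMap R K r * b) = algebraMap R K w * c := by
        have := congrArg (algebraMap R K) hs1
        simp only [map_mul] at this
        rw [← hbeq, ← hceq]
        field_simp
        linear_combination this
      have hwI : w ∈ I := by
        rw [hI w]
        refine ⟨s1 • b, Submodule.smul_mem B _ hb, ?_⟩
        rw [Algebra.smul_def, Algebra.smul_def, Algebra.smul_def]
        rw [← hK1]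
        ring
      have hs10 : s1 ≠ 0 := by rintro rfl; exact hs1v (Submodule.zero_mem _)
      have hw0 : w ≠ 0 := by
        rintro rfl
        rw [map_zero, zero_mul] at hK1
        exact (mul_ne_zero (halg s1 hs10) (mul_ne_zero hr0K hb0)) hK1
      have hcnt2 : cnt v (Ideal.span {a}) ≤ cnt v (Ideal.span {w}) := by
        rw [hexact v hvI']
        exact le_trans hcI' (cnt_mono (Ideal.dvd_span_singleton.mpr hwI))
      obtain ⟨s2, w2, hs2v, hs2⟩ := loc_div v hw0 ha hcnt2
      have hs12 : s2 * s1 ∉ v.asIdeal := by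
        intro hmem
        rcases v.isPrime.mem_or_mem hmem with h | h
        exacts [hs2v h, hs1v h]
      refine ⟨s2 * s1, hs12, (e * w2) • c, Submodule.smul_mem P _ hc, ?_⟩
      have hK2 : algebraMap R K s2 * algebraMap R K w = algebraMap R K w2 * algebraMap R K a := by
        rw [← map_mul, ← map_mul, hs2]
      rw [Algebra.smul_def, map_mul, map_mul]
      calc algebraMap R K s2 * algebraMap R K s1 * (algebraMap R K e * algebraMap R K r * b)
          = algebraMap R K e * (algebraMap R K s2 * (algebraMap R K s1 * (algebraMap R K r * b))) := by
            ring
        _ = algebraMap R K e * (algebraMap R K s2 * (algebraMap R K w * c)) := by rw [hK1]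
        _ = algebraMap R K e * ((algebraMap R K s2 * algebraMap R K w) * c) := by ring
        _ = algebraMap R K e * ((algebraMap R K w2 * algebraMap R K a) * c) := by rw [hK2]
        _ = algebraMap R K a * (algebraMap R K e * algebraMap R K w2 * c) := by ring
    · -- impossible case : c/(r*b) would be strictly v-integral
      obtain ⟨s1, w, hs1v, hs1⟩ := loc_div v hDn0 hNn0 hdi
      have hK1 : algebraMap R K s1 * c = algebraMap R K w * (algebraMap R K r * b) := by
        have := congrArg (algebraMap R K) hs1
        simp only [map_mul] at this
        rw [← hbeq, ← hceq]
        field_simp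
        linear_combination this
      have hs1I : s1 ∈ I := by
        rw [hI s1]
        refine ⟨w • b, Submodule.smul_mem B _ hb, ?_⟩
        rw [Algebra.smul_def, Algebra.smul_def, Algebra.smul_def, hK1]
        ring
      exact absurd (hIv hs1I) hs1v


/-- Key generation lemma: if `B ≤ P` are `R`-submodules of the fraction field with `B ≠ 0`,
then any `c ∈ P` is a two-term combination `q₁*b₁ + q₂*b₂` with `bᵢ ∈ B` and `qᵢ * B ⊆ P`. -/
lemma crux (B P : Submodule R K) (hBP : B ≤ P) {c : K} (hc : c ∈ P)
    {b₀ : K} (hb₀B : b₀ ∈ B) (hb₀ : b₀ ≠ 0) :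
    ∃ q₁ q₂ b₁ b₂ : K, b₁ ∈ B ∧ b₂ ∈ B ∧ (∀ y ∈ B, q₁ * y ∈ P) ∧ (∀ y ∈ B, q₂ * y ∈ P) ∧
      q₁ * b₁ + q₂ * b₂ = c := by
  classical
  have hinj : Function.Injective (algebraMap R K) := IsFractionRing.injective R K
  have halg : ∀ z : R, z ≠ 0 → algebraMap R K z ≠ 0 :=
    fun z hz => (map_ne_zero_iff _ hinj).mpr hz
  by_cases hc0 : c = 0
  · exact ⟨0, 0, 0, 0, Submodule.zero_mem B, Submodule.zero_mem B,
      fun y _ => by simpa using Submodule.zero_mem P,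
      fun y _ => by simpa using Submodule.zero_mem P, by simp [hc0]⟩
  by_cases hRF : IsField R
  ·
    refine ⟨c / b₀, 0, b₀, 0, hb₀B, Submodule.zero_mem B,
      fun y hy => ?_, fun y _ => by simpa using Submodule.zero_mem P, by
        field_simp; simp⟩
    -- y = (y/b₀) • b₀ with y/b₀ in the image of R
    obtain ⟨x, z, hz, hxz⟩ := IsFractionRing.div_surjective (A := R) (y / b₀)
    have hz0 : z ≠ 0 := nonZeroDivisors.ne_zero hz
    obtain ⟨zi, hzi⟩ := hRF.mul_inv_cancel hz0
    have hzK : algebraMap R K z * algebraMap R K zi = 1 := by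
      rw [← map_mul, hzi, map_one]
    have hyb : y / b₀ = algebraMap R K (x * zi) := by
      rw [← hxz, map_mul, div_eq_iff (halg z hz0), mul_assoc,
        mul_comm (algebraMap R K zi), hzK, mul_one]
    have : c / b₀ * y = (x * zi) • c := by
      rw [Algebra.smul_def, ← hyb]
      field_simp
    rw [this]
    exact Submodule.smul_mem P _ hc
  -- main case
  obtain ⟨x₀, r, hrmem, hx₀r⟩ := IsFractionRing.div_surjective (A := R) (c / b₀)
  have hr : r ≠ 0 := nonZeroDivisors.ne_zero hrmem
  have hrc : r • c = x₀ • b₀ := by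
    rw [Algebra.smul_def, Algebra.smul_def]
    have hb := halg r hr
    field_simp at hx₀r
    linear_combination -hx₀r
  -- the ideal I = { x | x • c ∈ r • B }
  set I : Ideal R := Submodule.comap (LinearMap.toSpanSingleton R K c)
    (Submodule.map (LinearMap.lsmul R K r) B) with hIdef
  have hImem : ∀ x : R, x ∈ I ↔ ∃ b ∈ B, x • c = r • b := by
    intro x
    constructor
    · rintro ⟨b, hbB, hbeq⟩
      exact ⟨b, hbB, by simpa using hbeq.symm⟩
    · rintro ⟨b, hbB, hbeq⟩
      exact ⟨b, hbB, by simpa using hbeq.symm⟩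
  have hrrI : r * r ∈ I := by
    rw [hImem]
    refine ⟨x₀ • b₀, Submodule.smul_mem B _ hb₀B, ?_⟩
    rw [mul_smul, hrc, smul_comm]
  have hI0 : I ≠ 0 := by
    intro h0
    have := h0 ▸ hrrI
    simp only [Ideal.zero_eq_bot, Ideal.mem_bot] at this
    exact (mul_ne_zero hr hr) this
  set I' : Ideal R := I ⊓ Ideal.span {r} with hI'def
  have hI'0 : I' ≠ 0 := by
    intro h0
    have hmem : r * r * r ∈ I' := by
      rw [hI'def]
      refine Submodule.mem_inf.mpr ⟨Ideal.mul_mem_right r _ hrrI, ?_⟩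
      exact Ideal.mem_span_singleton.mpr ⟨r * r, by ring⟩
    rw [h0] at hmem
    simp only [Ideal.zero_eq_bot, Ideal.mem_bot] at hmem
    exact (mul_ne_zero (mul_ne_zero hr hr) hr) hmem
  -- finite sets of primes
  have hSfin : {w : HeightOneSpectrum R | w.asIdeal ∣ I'}.Finite := Ideal.finite_factors hI'0
  set S : Finset (HeightOneSpectrum R) := hSfin.toFinset with hSdef
  obtain ⟨a₁, ha₁0, ha₁I', ha₁ex⟩ := exists_exact hI'0 S
  obtain ⟨E₁, hE₁⟩ : I' ∣ Ideal.span {a₁} := Ideal.dvd_span_singleton.mpr ha₁I'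
  have hE₁0 : E₁ ≠ 0 := by
    rintro rfl
    rw [mul_zero] at hE₁
    exact ha₁0 (by simpa [Ideal.span_singleton_eq_bot] using hE₁)
  have hS₂fin : {w : HeightOneSpectrum R | w.asIdeal ∣ E₁}.Finite := Ideal.finite_factors hE₁0
  obtain ⟨a₂, ha₂0, ha₂I', ha₂ex⟩ := exists_exact hI'0 (S ∪ hS₂fin.toFinset)
  obtain ⟨E₂, hE₂⟩ : I' ∣ Ideal.span {a₂} := Ideal.dvd_span_singleton.mpr ha₂I'
  have hE₂0 : E₂ ≠ 0 := by
    rintro rfl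
    rw [mul_zero] at hE₂
    exact ha₂0 (by simpa [Ideal.span_singleton_eq_bot] using hE₂)
  have hexact₁ : ∀ w : HeightOneSpectrum R, w.asIdeal ∣ I' →
      cnt w (Ideal.span {a₁}) = cnt w I' := by
    intro w hw
    exact ha₁ex w (hSfin.mem_toFinset.mpr hw)
  have hexact₂ : ∀ w : HeightOneSpectrum R, w.asIdeal ∣ I' →
      cnt w (Ideal.span {a₂}) = cnt w I' := by
    intro w hw
    exact ha₂ex w (Finset.mem_union_left _ (hSfin.mem_toFinset.mpr hw))
  -- E₁ and E₂ are coprime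
  have hcop : E₁ ⊔ E₂ = ⊤ := by
    by_contra hne
    obtain ⟨m, hm, hle⟩ := Ideal.exists_le_maximal _ hne
    have hm0 : m ≠ ⊥ := Ring.ne_bot_of_isMaximal_of_not_isField hm hRF
    set w : HeightOneSpectrum R := ⟨m, hm.isPrime, hm0⟩ with hwdef
    have hwE₁ : w.asIdeal ∣ E₁ := Ideal.dvd_iff_le.mpr (le_trans le_sup_left hle)
    have hwE₂ : w.asIdeal ∣ E₂ := Ideal.dvd_iff_le.mpr (le_trans le_sup_right hle)
    have hwS₂ : w ∈ S ∪ hS₂fin.toFinset :=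
      Finset.mem_union_right _ (hS₂fin.mem_toFinset.mpr hwE₁)
    have h1 := ha₂ex w hwS₂
    rw [hE₂, cnt_mul] at h1
    have h2 : cnt w I' + cnt w E₂ ≤ cnt w I' + 0 := by simpa using h1.le
    have h3 := (WithTop.add_le_add_iff_left (cnt_ne_top hI'0)).mp h2
    have h3' : cnt w E₂ = 0 := le_antisymm h3 zero_le
    exact (cnt_eq_zero.mp h3') hwE₂
  obtain ⟨e₁, he₁, e₂, he₂, hee⟩ := Submodule.mem_sup.mp (hcop ▸ Submodule.mem_top :
    (1:R) ∈ E₁ ⊔ E₂)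
  -- bᵢ with r • bᵢ = aᵢ • c
  have ha₁I : a₁ ∈ I := (hI'def ▸ ha₁I' : a₁ ∈ I ⊓ Ideal.span {r}).1
  have ha₂I : a₂ ∈ I := (hI'def ▸ ha₂I' : a₂ ∈ I ⊓ Ideal.span {r}).1
  obtain ⟨b₁, hb₁B, hb₁⟩ := (hImem a₁).mp ha₁I
  obtain ⟨b₂, hb₂B, hb₂⟩ := (hImem a₂).mp ha₂I
  have ha₁K : algebraMap R K a₁ ≠ 0 := halg a₁ ha₁0
  have ha₂K : algebraMap R K a₂ ≠ 0 := halg a₂ ha₂0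
  refine ⟨algebraMap R K e₁ * algebraMap R K r / algebraMap R K a₁,
    algebraMap R K e₂ * algebraMap R K r / algebraMap R K a₂, b₁, b₂, hb₁B, hb₂B, ?_, ?_, ?_⟩
  · -- q₁ * B ⊆ P
    intro y hy
    refine mem_of_loc hRF P _ (fun v => ?_)
    obtain ⟨s, hsv, p, hpP, heq⟩ := main_v B P hBP hc hc0 hr hImem hI0 hI'def ha₁0 ha₁I
      hE₁ hexact₁ he₁ v hy
    refine ⟨s, hsv, ?_⟩
    have hsp : s • (algebraMap R K e₁ * algebraMap R K r / algebraMap R K a₁ * y) = p := by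
      rw [Algebra.smul_def]
      field_simp
      linear_combination heq
    rw [hsp]
    exact hpP
  · -- q₂ * B ⊆ P
    intro y hy
    refine mem_of_loc hRF P _ (fun v => ?_)
    obtain ⟨s, hsv, p, hpP, heq⟩ := main_v B P hBP hc hc0 hr hImem hI0 hI'def ha₂0 ha₂I
      hE₂ hexact₂ he₂ v hy
    refine ⟨s, hsv, ?_⟩
    have hsp : s • (algebraMap R K e₂ * algebraMap R K r / algebraMap R K a₂ * y) = p := by
      rw [Algebra.smul_def]
      field_simp
      linear_combination heq
    rw [hsp]
    exact hpP
  · -- the sum is c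
    have hb₁K : algebraMap R K r * b₁ = algebraMap R K a₁ * c := by
      have := hb₁
      rw [Algebra.smul_def, Algebra.smul_def] at this
      linear_combination -this
    have hb₂K : algebraMap R K r * b₂ = algebraMap R K a₂ * c := by
      have := hb₂
      rw [Algebra.smul_def, Algebra.smul_def] at this
      linear_combination -this
    have heeK : algebraMap R K e₁ + algebraMap R K e₂ = 1 := by
      rw [← map_add, hee, map_one]
    field_simp
    linear_combination (algebraMap R K e₁ * algebraMap R K a₂ * hb₁K)
      + (algebraMap R K e₂ * algebraMap R K a₁ * hb₂K)
      + (algebraMap R K a₁ * algebraMap R K a₂ * c * heeK)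

end Crux


section Emb
variable {R : Type*} [CommRing R] [IsDomain R] {A : Type u} [AddCommGroup A] [Module R A]
  [NoZeroSMulDivisors R A]

lemma mem_pureGen {c x : A} : x ∈ pureGen R c ↔ ∃ r : R, r ≠ 0 ∧ ∃ s : R, r • x = s • c :=
  Iff.rfl

noncomputable def epsFun (R : Type*) {A : Type u} [CommRing R] [IsDomain R] [AddCommGroup A] [Module R A] (c : A) (p : ↥(pureGen R c)) : FractionRing R :=
  algebraMap R _ (p.2.choose_spec.2.choose) / algebraMap R _ p.2.choose

lemma epsFun_eq {c : A} (hc : c ≠ 0) (p : ↥(pureGen R c)) {r s : R} (hr : r ≠ 0)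
    (h : r • (p : A) = s • c) :
    epsFun R c p = algebraMap R (FractionRing R) s / algebraMap R (FractionRing R) r := by
  have hinj : Function.Injective (algebraMap R (FractionRing R)) :=
    IsFractionRing.injective R (FractionRing R)
  have halg : ∀ z : R, z ≠ 0 → algebraMap R (FractionRing R) z ≠ 0 :=
    fun z hz => (map_ne_zero_iff _ hinj).mpr hz
  have hd : p.2.choose ≠ 0 := p.2.choose_spec.1
  have hn : p.2.choose • (p : A) = p.2.choose_spec.2.choose • c :=
    p.2.choose_spec.2.choose_spec
  have hcross : p.2.choose_spec.2.choose * r = s * p.2.choose := by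
    have h1 : (r * p.2.choose_spec.2.choose) • c = (p.2.choose * s) • c := by
      rw [mul_smul, mul_smul, ← hn, ← h, smul_comm]
    have h2 : (r * p.2.choose_spec.2.choose - p.2.choose * s) • c = 0 := by
      rw [sub_smul, h1, sub_self]
    rcases smul_eq_zero.mp h2 with h3 | h3
    · have := sub_eq_zero.mp h3
      linear_combination this
    · exact absurd h3 hc
  rw [epsFun, div_eq_div_iff (halg _ hd) (halg _ hr), ← map_mul, ← map_mul, hcross]

/-- The canonical embedding of the pure rank-one submodule generated by `c ≠ 0` into the
fraction field, sending `c` to `1`. -/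
noncomputable def eps (R : Type*) {A : Type u} [CommRing R] [IsDomain R] [AddCommGroup A] [Module R A] [NoZeroSMulDivisors R A] (c : A) (hc : c ≠ 0) : ↥(pureGen R c) →ₗ[R] FractionRing R where
  toFun := epsFun R c
  map_add' p q := by
    obtain ⟨rp, hrp, sp, hsp⟩ := p.2
    obtain ⟨rq, hrq, sq, hsq⟩ := q.2
    have hadd : (rp * rq) • ((p : A) + (q : A)) = (rq * sp + rp * sq) • c := by
      have e1 : (rp * rq) • (p : A) = (rq * sp) • c := by
        rw [mul_comm, mul_smul, hsp, mul_smul]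
      have e2 : (rp * rq) • (q : A) = (rp * sq) • c := by
        rw [mul_smul, hsq, mul_smul]
      rw [smul_add, e1, e2, add_smul]
    have h1 : epsFun R c (p + q)
        = algebraMap R (FractionRing R) (rq * sp + rp * sq)
          / algebraMap R (FractionRing R) (rp * rq) :=
      epsFun_eq hc _ (mul_ne_zero hrp hrq) (by rw [Submodule.coe_add]; exact hadd)
    rw [h1, epsFun_eq hc p hrp hsp, epsFun_eq hc q hrq hsq]
    have h2 := (map_ne_zero_iff _ (IsFractionRing.injective R (FractionRing R))).mpr hrp
    have h3 := (map_ne_zero_iff _ (IsFractionRing.injective R (FractionRing R))).mpr hrq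
    field_simp
    simp only [map_add, map_mul]; ring
  map_smul' t p := by
    show epsFun R c (t • p) = (RingHom.id R) t • epsFun R c p
    obtain ⟨rp, hrp, sp, hsp⟩ := p.2
    have hts : rp • (t • (p : A)) = (t * sp) • c := by
      rw [smul_comm, hsp, smul_smul]
    have h1 : epsFun R c (t • p)
        = algebraMap R (FractionRing R) (t * sp) / algebraMap R (FractionRing R) rp :=
      epsFun_eq hc _ hrp (by rw [Submodule.coe_smul]; exact hts)
    rw [h1, epsFun_eq hc p hrp hsp, RingHom.id_apply, Algebra.smul_def, map_mul]
    ring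

lemma eps_inj {c : A} (hc : c ≠ 0) : Function.Injective (eps R c hc) := by
  rw [← LinearMap.ker_eq_bot]
  rw [Submodule.eq_bot_iff]
  intro p hp
  obtain ⟨rp, hrp, sp, hsp⟩ := p.2
  have h1 : eps R c hc p = algebraMap R (FractionRing R) sp / algebraMap R (FractionRing R) rp :=
    epsFun_eq hc p hrp hsp
  rw [LinearMap.mem_ker] at hp
  rw [hp] at h1
  have hsp0 : sp = 0 := by
    have h2 := h1.symm
    rw [div_eq_zero_iff] at h2
    rcases h2 with h2 | h2
    · exact (map_eq_zero_iff _ (IsFractionRing.injective R (FractionRing R))).mp h2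
    · exact absurd h2 ((map_ne_zero_iff _ (IsFractionRing.injective R (FractionRing R))).mpr hrp)
  have h3 : rp • (p : A) = 0 := by rw [hsp, hsp0, zero_smul]
  rcases smul_eq_zero.mp h3 with h4 | h4
  · exact absurd h4 hrp
  · exact Subtype.ext h4

lemma eps_self {c : A} (hc : c ≠ 0) :
    eps R c hc ⟨c, ⟨1, one_ne_zero, 1, rfl⟩⟩ = 1 := by
  have h1 : eps R c hc ⟨c, ⟨1, one_ne_zero, 1, rfl⟩⟩
      = algebraMap R (FractionRing R) 1 / algebraMap R (FractionRing R) 1 :=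
    epsFun_eq hc _ one_ne_zero rfl
  rw [h1, map_one, div_one]

end Emb

/-- Let `A` be a finite rank torsion-free module over a Dedekind
domain.  (i) If `A` is a self-pure-generator then every pure rank-1 submodule
`⟨a⟩_*` (for `a ≠ 0`) is `A`-generated.  (ii) Conversely, if `A` has a direct
summand `B` of rank `1` with `type(B) = IT(A)` (since `B` is a summand this is
equivalent to: `B` embeds into `⟨a⟩_*` for every nonzero `a`), then `A` is a
self-pure-generator. -/
theorem stmt5 (R : Type*) [CommRing R] [IsDomain R] [IsDedekindDomain R]
    (A : Type u) [AddCommGroup A] [Module R A] [NoZeroSMulDivisors R A]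
    (hfin : Module.rank R A < Cardinal.aleph0) :
    (SelfPureGenerator R A → ∀ a : A, a ≠ 0 → ModGenerated R (pureGen R a)) ∧
    ((∃ B C : Submodule R A, IsCompl B C ∧ Module.rank R B = 1 ∧
        ∀ a : A, a ≠ 0 → ∃ f : B →ₗ[R] (pureGen R a), Function.Injective f) →
      SelfPureGenerator R A) := by
  constructor
  · intro hSPG a _
    refine hSPG _ ?_
    intro r x hr hmem
    obtain ⟨r', hr', s, hs⟩ := hmem
    exact ⟨r' * r, mul_ne_zero hr' hr, s, by rw [mul_smul]; exact hs⟩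
  · rintro ⟨B, C, hBC, hrkB, hembed⟩ N hNpure
    classical
    refine ⟨(A →ₗ[R] ↥N), Finsupp.lsum ℕ (fun φ => φ), ?_⟩
    rintro ⟨x, hx⟩
    by_cases hx0 : x = 0
    · exact ⟨0, by rw [map_zero]; exact Subtype.ext (by simp [hx0])⟩
    · have hxP : x ∈ pureGen R x := ⟨1, one_ne_zero, 1, rfl⟩
      have hPN : pureGen R x ≤ N := by
        intro z hz
        obtain ⟨r, hr, s, hs⟩ := hz
        exact hNpure r z hr (hs ▸ Submodule.smul_mem N s hx)
      obtain ⟨j, hj⟩ := hembed x hx0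
      have hBnt : Nontrivial ↥B := by
        rw [← rank_pos_iff_nontrivial (R := R)]
        rw [hrkB]
        norm_num
      obtain ⟨β₀, hβ₀⟩ := exists_ne (0 : ↥B)
      set ε : ↥(pureGen R x) →ₗ[R] FractionRing R := eps R x hx0 with hεdef
      have hεinj : Function.Injective ε := eps_inj hx0
      set f2 : ↥B →ₗ[R] FractionRing R := ε.comp j with hf2
      have hf2inj : Function.Injective f2 := hεinj.comp hj
      obtain ⟨q₁, q₂, b₁, b₂, hb₁, hb₂, hq₁, hq₂, hsum⟩ :=
        crux (LinearMap.range f2) (LinearMap.range ε)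
          (hf2 ▸ LinearMap.range_comp_le_range j ε)
          (c := (1 : FractionRing R)) ⟨⟨x, hxP⟩, eps_self hx0⟩
          (b₀ := f2 β₀) ⟨β₀, rfl⟩
          (fun h0 => hβ₀ (hf2inj (by rw [h0, map_zero])))
      obtain ⟨β₁, hβ₁⟩ := hb₁
      obtain ⟨β₂, hβ₂⟩ := hb₂
      set χ₁ : ↥B →ₗ[R] FractionRing R := q₁ • f2 with hχ₁
      set χ₂ : ↥B →ₗ[R] FractionRing R := q₂ • f2 with hχ₂
      have hχ₁mem : ∀ β : ↥B, χ₁ β ∈ LinearMap.range ε := by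
        intro β
        have h := hq₁ (f2 β) ⟨β, rfl⟩
        simpa [hχ₁, smul_eq_mul] using h
      have hχ₂mem : ∀ β : ↥B, χ₂ β ∈ LinearMap.range ε := by
        intro β
        have h := hq₂ (f2 β) ⟨β, rfl⟩
        simpa [hχ₂, smul_eq_mul] using h
      set eqv := LinearEquiv.ofInjective ε hεinj with heqv
      set ν₁ : ↥B →ₗ[R] ↥(pureGen R x) :=
        eqv.symm.toLinearMap.comp (χ₁.codRestrict (LinearMap.range ε) hχ₁mem) with hν₁
      set ν₂ : ↥B →ₗ[R] ↥(pureGen R x) :=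
        eqv.symm.toLinearMap.comp (χ₂.codRestrict (LinearMap.range ε) hχ₂mem) with hν₂
      have hν₁eps : ∀ β, ε (ν₁ β) = q₁ * f2 β := by
        intro β
        have h1 : ε (eqv.symm ⟨χ₁ β, hχ₁mem β⟩) = χ₁ β :=
          LinearEquiv.ofInjective_symm_apply (h := hεinj) ε _
        exact h1
      have hν₂eps : ∀ β, ε (ν₂ β) = q₂ * f2 β := by
        intro β
        have h1 : ε (eqv.symm ⟨χ₂ β, hχ₂mem β⟩) = χ₂ β :=
          LinearEquiv.ofInjective_symm_apply (h := hεinj) ε _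
        exact h1
      set π : A →ₗ[R] ↥B := Submodule.projectionOnto (p := B) (q := C) hBC with hπ
      set φ₁ : A →ₗ[R] ↥N := (Submodule.inclusion hPN).comp (ν₁.comp π) with hφ₁
      set φ₂ : A →ₗ[R] ↥N := (Submodule.inclusion hPN).comp (ν₂.comp π) with hφ₂
      refine ⟨Finsupp.single φ₁ (β₁ : A) + Finsupp.single φ₂ (β₂ : A), ?_⟩
      rw [map_add, Finsupp.lsum_single, Finsupp.lsum_single]
      have hπ₁ : π (β₁ : A) = β₁ := Submodule.projectionOnto_apply_left hBC β₁
      have hπ₂ : π (β₂ : A) = β₂ := Submodule.projectionOnto_apply_left hBC β₂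
      have hkey : ν₁ β₁ + ν₂ β₂ = ⟨x, hxP⟩ := by
        apply hεinj
        rw [map_add, hν₁eps, hν₂eps, hβ₁, hβ₂]
        rw [show ε ⟨x, hxP⟩ = 1 from eps_self hx0]
        exact hsum
      apply Subtype.ext
      calc ((φ₁ (β₁ : A) + φ₂ (β₂ : A) : ↥N) : A)
          = ((ν₁ β₁ : A) + (ν₂ β₂ : A)) := by
            rw [Submodule.coe_add, hφ₁, hφ₂]
            simp [hπ₁, hπ₂]
        _ = x := by rw [← Submodule.coe_add, hkey]
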